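/- Fix k ≥ 2. The number of lattice points (m,n) with 1 ≤ m,n ≤ x satisfying gcd_k(m,n) = 1 equals x²/ζ(k+1) + O_k(x log x), where ζ is the Riemann zeta function. -/

import Mathlib

open Finset ArithmeticFunction
open scoped ArithmeticFunction.Moebius

lemma lcm_pow_dvd (a b k : ℕ) (ha : a ≠ 0) (hb : b ≠ 0) :
    Nat.lcm a b ^ k ∣ Nat.lcm (a ^ k) (b ^ k) := by
  have h1 : Nat.lcm a b ^ k ≠ 0 := pow_ne_zero _ (Nat.lcm_ne_zero ha hb)
  have h2 : Nat.lcm (a ^ k) (b ^ k) ≠ 0 :=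
    Nat.lcm_ne_zero (pow_ne_zero _ ha) (pow_ne_zero _ hb)
  rw [← Nat.factorization_le_iff_dvd h1 h2]
  intro p
  rw [Nat.factorization_pow, Nat.factorization_lcm ha hb,
    Nat.factorization_lcm (pow_ne_zero _ ha) (pow_ne_zero _ hb),
    Nat.factorization_pow, Nat.factorization_pow]
  simp only [Finsupp.smul_apply, Finsupp.sup_apply, smul_eq_mul]
  rcases le_total (a.factorization p) (b.factorization p) with h | h
  · simp [sup_of_le_right h, sup_of_le_right (Nat.mul_le_mul_left k h)]
  · simp [sup_of_le_left h, sup_of_le_left (Nat.mul_le_mul_left k h)]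

noncomputable def gcdk (k : ℕ) (a b : ℤ) : ℕ :=
  sSup {d : ℕ | (d : ℤ) ∣ a ∧ (d : ℤ) ^ k ∣ b}

lemma gcdk_set_eq (k m n : ℕ) :
    {d : ℕ | (d : ℤ) ∣ (m : ℤ) ∧ (d : ℤ) ^ k ∣ (n : ℤ)} = {d : ℕ | d ∣ m ∧ d ^ k ∣ n} := by
  ext d
  simp only [Set.mem_setOf_eq]
  constructor
  · rintro ⟨h1, h2⟩
    exact ⟨Int.natCast_dvd_natCast.mp h1,
      Int.natCast_dvd_natCast.mp (by push_cast at h2 ⊢; exact h2)⟩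
  · rintro ⟨h1, h2⟩
    exact ⟨Int.natCast_dvd_natCast.mpr h1, by push_cast; exact_mod_cast Int.natCast_dvd_natCast.mpr h2⟩

lemma gcdk_divisors (k m n N : ℕ) (hm : 1 ≤ m) (hmN : m ≤ N) (hn : 1 ≤ n) :
    (Finset.Icc 1 N).filter (fun d : ℕ => (d : ℤ) ∣ (m : ℤ) ∧ (d : ℤ) ^ k ∣ (n : ℤ))
      = (gcdk k (m : ℤ) (n : ℤ)).divisors := by
  classical
  set D : Set ℕ := {d : ℕ | d ∣ m ∧ d ^ k ∣ n} with hD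
  set g : ℕ := sSup D with hgg
  have hgdef : gcdk k (m : ℤ) (n : ℤ) = g := by
    rw [gcdk, gcdk_set_eq]
  rw [hgdef]
  have hbdd : BddAbove D := ⟨m, fun d hd => Nat.le_of_dvd hm hd.1⟩
  have h1D : (1 : ℕ) ∈ D := ⟨one_dvd _, by simpa using one_dvd n⟩
  have hne : D.Nonempty := ⟨1, h1D⟩
  have hgD : g ∈ D := Nat.sSup_mem hne hbdd
  have hg1 : 1 ≤ g := le_csSup hbdd h1D
  have hdvdg : ∀ d ∈ D, d ∣ g := by
    intro d hd
    have hd0 : d ≠ 0 := by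
      rintro rfl
      exact absurd (zero_dvd_iff.mp hd.1) (by omega)
    have hg0 : g ≠ 0 := by omega
    have hlD : Nat.lcm d g ∈ D := by
      refine ⟨Nat.lcm_dvd hd.1 hgD.1, ?_⟩
      exact (lcm_pow_dvd d g k hd0 hg0).trans (Nat.lcm_dvd hd.2 hgD.2)
    have hle : Nat.lcm d g ≤ g := le_csSup hbdd hlD
    have hlpos : 0 < Nat.lcm d g := Nat.pos_of_ne_zero (Nat.lcm_ne_zero hd0 hg0)
    have : g ≤ Nat.lcm d g := Nat.le_of_dvd hlpos (Nat.dvd_lcm_right d g)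
    have heq : Nat.lcm d g = g := le_antisymm hle this
    exact heq ▸ Nat.dvd_lcm_left d g
  ext d
  simp only [Finset.mem_filter, Finset.mem_Icc, Nat.mem_divisors]
  constructor
  · rintro ⟨⟨hd1, hdN⟩, hdvd⟩
    have hdD : d ∈ D := by
      have h' : d ∈ {d : ℕ | (d : ℤ) ∣ (m : ℤ) ∧ (d : ℤ) ^ k ∣ (n : ℤ)} := hdvd
      rwa [gcdk_set_eq] at h'
    exact ⟨hdvdg d hdD, by omega⟩
  · rintro ⟨hdg, -⟩
    have hdD : d ∈ D := ⟨hdg.trans hgD.1, (pow_dvd_pow_of_dvd hdg k).trans hgD.2⟩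
    have hd1 : 1 ≤ d := Nat.pos_of_ne_zero (by rintro rfl; exact absurd (zero_dvd_iff.mp hdg) (by omega))
    have hdN : d ≤ N := (Nat.le_of_dvd hm hdD.1).trans hmN
    have : d ∈ {d : ℕ | (d : ℤ) ∣ (m : ℤ) ∧ (d : ℤ) ^ k ∣ (n : ℤ)} := by
      rw [gcdk_set_eq]; exact hdD
    exact ⟨⟨hd1, hdN⟩, this⟩

lemma moebius_sum_eq (k m n N : ℕ) (hm : 1 ≤ m) (hmN : m ≤ N) (hn : 1 ≤ n) :
    ∑ d ∈ Finset.Icc 1 N,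
        (if (d : ℤ) ∣ (m : ℤ) ∧ (d : ℤ) ^ k ∣ (n : ℤ) then μ d else 0)
      = if gcdk k (m : ℤ) (n : ℤ) = 1 then 1 else 0 := by
  classical
  rw [← Finset.sum_filter, gcdk_divisors k m n N hm hmN hn,
    ← coe_mul_zeta_apply, moebius_mul_coe_zeta, one_apply]

lemma card_dvd_filter (N p : ℕ) :
    ((Finset.Icc 1 N).filter (fun m => p ∣ m)).card = N / p := by
  have : Finset.Icc 1 N = Finset.Ioc 0 N := by rw [← Finset.Icc_add_one_left_eq_Ioc]; rfl
  rw [this, Nat.Ioc_filter_dvd_card_eq_div]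

section count
variable (k N : ℕ)

example (hmoebius : ∀ m n : ℕ, 1 ≤ m → m ≤ N → 1 ≤ n →
      (∑ d ∈ Finset.Icc 1 N,
        (if (d : ℤ) ∣ (m : ℤ) ∧ (d : ℤ) ^ k ∣ (n : ℤ) then μ d else 0))
      = if (0 : ℕ) = 1 then 1 else 0) : True := trivial

lemma count_eq (gcdk' : ℕ → ℤ → ℤ → ℕ)
    (hmoebius : ∀ m n : ℕ, 1 ≤ m → m ≤ N → 1 ≤ n →
      (∑ d ∈ Finset.Icc 1 N,
        (if (d : ℤ) ∣ (m : ℤ) ∧ (d : ℤ) ^ k ∣ (n : ℤ) then μ d else 0))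
      = if gcdk' k (m : ℤ) (n : ℤ) = 1 then 1 else 0) :
    (((Finset.Icc 1 N ×ˢ Finset.Icc 1 N).filter
        (fun mn => gcdk' k (mn.1 : ℤ) (mn.2 : ℤ) = 1)).card : ℤ)
    = ∑ d ∈ Finset.Icc 1 N, μ d * (N / d : ℕ) * (N / d ^ k : ℕ) := by
  classical
  rw [Finset.card_filter]
  push_cast
  have step1 : ∑ mn ∈ Finset.Icc 1 N ×ˢ Finset.Icc 1 N,
      (if gcdk' k (mn.1 : ℤ) (mn.2 : ℤ) = 1 then (1 : ℤ) else 0)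
      = ∑ mn ∈ Finset.Icc 1 N ×ˢ Finset.Icc 1 N, ∑ d ∈ Finset.Icc 1 N,
        (if (d : ℤ) ∣ (mn.1 : ℤ) ∧ (d : ℤ) ^ k ∣ (mn.2 : ℤ) then μ d else 0) := by
    refine Finset.sum_congr rfl fun mn hmn => ?_
    rw [Finset.mem_product, Finset.mem_Icc, Finset.mem_Icc] at hmn
    exact (hmoebius mn.1 mn.2 hmn.1.1 hmn.1.2 hmn.2.1).symm
  rw [step1, Finset.sum_comm]
  refine Finset.sum_congr rfl fun d hd => ?_
  have hinner : ∑ mn ∈ Finset.Icc 1 N ×ˢ Finset.Icc 1 N,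
      (if (d : ℤ) ∣ (mn.1 : ℤ) ∧ (d : ℤ) ^ k ∣ (mn.2 : ℤ) then μ d else 0)
      = (((Finset.Icc 1 N ×ˢ Finset.Icc 1 N).filter
          (fun mn => (d : ℤ) ∣ (mn.1 : ℤ) ∧ (d : ℤ) ^ k ∣ (mn.2 : ℤ))).card : ℤ) * μ d := by
    rw [← Finset.sum_filter, Finset.sum_const, nsmul_eq_mul]
  rw [hinner, Finset.filter_product (fun m : ℕ => (d : ℤ) ∣ (m : ℤ))
      (fun n : ℕ => (d : ℤ) ^ k ∣ (n : ℤ)), Finset.card_product]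
  have e1 : (Finset.Icc 1 N).filter (fun m : ℕ => (d : ℤ) ∣ (m : ℤ))
      = (Finset.Icc 1 N).filter (fun m : ℕ => d ∣ m) := by
    apply Finset.filter_congr; intro m _; simp [Int.natCast_dvd_natCast]
  have e2 : (Finset.Icc 1 N).filter (fun n : ℕ => (d : ℤ) ^ k ∣ (n : ℤ))
      = (Finset.Icc 1 N).filter (fun n : ℕ => d ^ k ∣ n) := by
    apply Finset.filter_congr; intro n _
    constructor
    · intro h; exact_mod_cast Int.natCast_dvd_natCast.mp (by push_cast at h ⊢; exact h)
    · intro h; push_cast; exact_mod_cast Int.natCast_dvd_natCast.mpr h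
  rw [e1, e2, card_dvd_filter, card_dvd_filter]
  push_cast
  ring
end count

lemma sum_inv_le (N : ℕ) : ∑ d ∈ Finset.Icc 1 N, (d : ℝ)⁻¹ ≤ 1 + Real.log N := by
  have h := harmonic_le_one_add_log N
  have e : ((harmonic N : ℚ) : ℝ) = ∑ d ∈ Finset.Icc 1 N, (d : ℝ)⁻¹ := by
    rw [harmonic_eq_sum_Icc]; push_cast; rfl
  linarith [e ▸ h]

lemma real_est (k N : ℕ) (hk : 2 ≤ k) (hN : 2 ≤ N) :
    |(∑ d ∈ Finset.Icc 1 N, ((μ d : ℝ) * ((N / d : ℕ) : ℝ) * ((N / d ^ k : ℕ) : ℝ)))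
      - ∑ d ∈ Finset.Icc 1 N, (μ d : ℝ) * ((N : ℝ) ^ 2 / (d : ℝ) ^ (k + 1))|
    ≤ 2 * N * (1 + Real.log N) := by
  rw [← Finset.sum_sub_distrib]
  refine (Finset.abs_sum_le_sum_abs _ _).trans ?_
  have key : ∀ d ∈ Finset.Icc 1 N,
      |((μ d : ℝ) * ((N / d : ℕ) : ℝ) * ((N / d ^ k : ℕ) : ℝ))
        - (μ d : ℝ) * ((N : ℝ) ^ 2 / (d : ℝ) ^ (k + 1))| ≤ 2 * N * (d : ℝ)⁻¹ := by
    intro d hd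
    rw [Finset.mem_Icc] at hd
    have hd1 : (1 : ℝ) ≤ (d : ℝ) := by exact_mod_cast hd.1
    have hd0 : (0 : ℝ) < (d : ℝ) := by linarith
    have hdk0 : (0 : ℝ) < (d : ℝ) ^ k := by positivity
    set A : ℝ := (N : ℝ) / d with hA
    set B : ℝ := (N : ℝ) / (d : ℝ) ^ k with hB
    have hA0 : 0 ≤ A := by positivity
    have hB0 : 0 ≤ B := by positivity
    set a : ℝ := ((N / d : ℕ) : ℝ) with ha
    set b : ℝ := ((N / d ^ k : ℕ) : ℝ) with hb
    have ha0 : 0 ≤ a := by positivity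
    have hb0 : 0 ≤ b := by positivity
    have haA : a ≤ A := Nat.cast_div_le
    have hbB : b ≤ B := by
      have := Nat.cast_div_le (α := ℝ) (m := N) (n := d ^ k)
      rw [hb, hB]; push_cast at this ⊢; exact this
    have hAa : A < a + 1 := by
      have e1 : (N / d : ℕ) = ⌊A⌋₊ := by
        rw [hA, Nat.floor_div_natCast, Nat.floor_natCast]
      rw [ha, e1]; exact Nat.lt_floor_add_one A
    have hBb : B < b + 1 := by
      have e1 : (N / d ^ k : ℕ) = ⌊B⌋₊ := by
        rw [hB, ← Nat.cast_pow, Nat.floor_div_natCast, Nat.floor_natCast]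
      rw [hb, e1]; exact Nat.lt_floor_add_one B
    have hab : |a * b - A * B| ≤ A + B := by
      rw [abs_le]
      constructor
      · nlinarith
      · nlinarith
    have hABeq : A * B = (N : ℝ) ^ 2 / (d : ℝ) ^ (k + 1) := by
      rw [hA, hB]
      field_simp
      ring
    have hmu : |(μ d : ℝ)| ≤ 1 := by
      have := abs_moebius_le_one (n := d)
      exact_mod_cast this
    have hBA : B ≤ A := by
      apply div_le_div_of_nonneg_left (by positivity) hd0
      exact le_self_pow₀ hd1 (by omega)
    rw [← hABeq]
    calc |(μ d : ℝ) * a * b - (μ d : ℝ) * (A * B)|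
        = |(μ d : ℝ)| * |a * b - A * B| := by rw [← abs_mul]; ring_nf
      _ ≤ 1 * (A + B) := mul_le_mul hmu hab (abs_nonneg _) (by norm_num)
      _ ≤ A + A := by linarith
      _ = 2 * N * (d : ℝ)⁻¹ := by rw [hA]; field_simp; ring
  refine (Finset.sum_le_sum key).trans ?_
  rw [← Finset.mul_sum]
  exact mul_le_mul_of_nonneg_left (sum_inv_le N) (by positivity)

lemma hre (k : ℕ) (hk : 2 ≤ k) : 1 < ((k : ℂ) + 1).re := by
  simp only [Complex.add_re, Complex.natCast_re, Complex.one_re]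
  have : (2 : ℝ) ≤ (k : ℝ) := by exact_mod_cast hk
  linarith

lemma hsummu (k : ℕ) (hk : 2 ≤ k) : LSeriesSummable (fun n => ((μ n : ℤ) : ℂ)) ((k : ℂ) + 1) :=
  ArithmeticFunction.LSeriesSummable_moebius_iff.mpr (hre k hk)

lemma zeta_inv_eq (k : ℕ) (hk : 2 ≤ k) :
    (riemannZeta ((k : ℂ) + 1))⁻¹ = LSeries (fun n => ((μ n : ℤ) : ℂ)) ((k : ℂ) + 1) := by
  have h := ArithmeticFunction.LSeries_zeta_mul_Lseries_moebius (hre k hk)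
  rw [ArithmeticFunction.LSeries_zeta_eq_riemannZeta (hre k hk)] at h
  exact inv_eq_of_mul_eq_one_right h

lemma term_eq (k d : ℕ) :
    LSeries.term (fun n => ((μ n : ℤ) : ℂ)) ((k : ℂ) + 1) d
      = if d = 0 then 0 else ((μ d : ℤ) : ℂ) / ((d : ℂ) ^ (k + 1)) := by
  rcases eq_or_ne d 0 with rfl | hd
  · simp [LSeries.term]
  · rw [LSeries.term_of_ne_zero hd, if_neg hd]
    congr 1
    have : ((k : ℂ) + 1) = ((k + 1 : ℕ) : ℂ) := by push_cast; ring
    rw [this, Complex.cpow_natCast]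

lemma norm_term_le (k d : ℕ) :
    ‖LSeries.term (fun n => ((μ n : ℤ) : ℂ)) ((k : ℂ) + 1) d‖ ≤ (((d : ℝ)) ^ (k + 1))⁻¹ := by
  rw [term_eq]
  rcases eq_or_ne d 0 with rfl | hd
  · simp
  · rw [if_neg hd, norm_div, norm_pow]
    have h1 : ‖((μ d : ℤ) : ℂ)‖ ≤ 1 := by
      rw [Complex.norm_intCast]
      exact_mod_cast ArithmeticFunction.abs_moebius_le_one (n := d)
    have h2 : ‖(d : ℂ)‖ = (d : ℝ) := by simp
    rw [h2, div_eq_mul_inv]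
    have hd0 : (0 : ℝ) < (d : ℝ) ^ (k + 1) := by
      have : 0 < d := Nat.pos_of_ne_zero hd
      positivity
    nlinarith [norm_nonneg ((μ d : ℤ) : ℂ), inv_nonneg.mpr hd0.le]

lemma basel_le : ∑' n : ℕ, (((n : ℝ)) ^ 2)⁻¹ ≤ 3 := by
  have h := hasSum_zeta_two.tsum_eq
  simp only [one_div] at h
  rw [h]
  nlinarith [Real.pi_le_four, Real.pi_pos]

lemma summable_sq_inv : Summable (fun n : ℕ => (((n : ℝ)) ^ 2)⁻¹) := by
  simpa only [one_div] using Real.summable_one_div_nat_pow.mpr one_lt_two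

lemma norm_zeta_inv_le (k : ℕ) (hk : 2 ≤ k) : ‖(riemannZeta ((k : ℂ) + 1))⁻¹‖ ≤ 3 := by
  rw [zeta_inv_eq k hk, LSeries]
  set F := LSeries.term (fun n => ((μ n : ℤ) : ℂ)) ((k : ℂ) + 1) with hF
  have hs : Summable fun n => ‖F n‖ := summable_norm_iff.mpr (hsummu k hk)
  refine (norm_tsum_le_tsum_norm hs).trans ?_
  refine (Summable.tsum_le_tsum (fun n => ?_) hs summable_sq_inv).trans basel_le
  refine (norm_term_le k n).trans ?_
  rcases eq_or_ne n 0 with rfl | hn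
  · simp
  · have h1 : (1 : ℝ) ≤ (n : ℝ) := by exact_mod_cast Nat.pos_of_ne_zero hn
    have : (n : ℝ) ^ 2 ≤ (n : ℝ) ^ (k + 1) := pow_le_pow_right₀ h1 (by omega)
    apply inv_anti₀ (by positivity) this

lemma tail_bound (k N : ℕ) (hk : 2 ≤ k) (hN : 2 ≤ N) :
    ‖(∑ d ∈ Finset.Icc 1 N, LSeries.term (fun n => ((μ n : ℤ) : ℂ)) ((k : ℂ) + 1) d)
      - (riemannZeta ((k : ℂ) + 1))⁻¹‖ ≤ 3 / N := by
  set F := LSeries.term (fun n => ((μ n : ℤ) : ℂ)) ((k : ℂ) + 1) with hF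
  have hsum : Summable F := hsummu k hk
  rw [zeta_inv_eq k hk, LSeries, ← Summable.sum_add_tsum_subtype_compl hsum (Finset.Icc 1 N),
    sub_add_cancel_left, norm_neg]
  have hN0 : (0 : ℝ) < (N : ℝ) := by positivity
  set g : ℕ → ℝ := fun n => (N : ℝ)⁻¹ * (((n : ℝ)) ^ 2)⁻¹ with hg
  have hgsum : Summable g := summable_sq_inv.mul_left _
  have hgnonneg : ∀ n, 0 ≤ g n := fun n => by positivity
  have hnorm : Summable (fun x : {x // x ∉ Finset.Icc 1 N} => ‖F ↑x‖) :=
    (summable_norm_iff.mpr hsum).subtype _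
  refine (norm_tsum_le_tsum_norm hnorm).trans ?_
  have hle : ∀ x : {x // x ∉ Finset.Icc 1 N}, ‖F ↑x‖ ≤ g ↑x := by
    rintro ⟨n, hn⟩
    simp only [Finset.mem_Icc, not_and_or, not_le] at hn
    refine (norm_term_le k n).trans ?_
    rcases hn with hn | hn
    · interval_cases n
      simp [hg]
    · have hn1 : 1 ≤ n := by omega
      have key : (N : ℝ) * (n : ℝ) ^ 2 ≤ (n : ℝ) ^ (k + 1) := by
        have : N * n ^ 2 ≤ n ^ (k + 1) := by
          calc N * n ^ 2 ≤ n * n ^ 2 := Nat.mul_le_mul_right _ (by omega)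
            _ = n ^ 3 := by ring
            _ ≤ n ^ (k + 1) := Nat.pow_le_pow_right hn1 (by omega)
        exact_mod_cast this
      show (((n : ℝ)) ^ (k + 1))⁻¹ ≤ (N : ℝ)⁻¹ * (((n : ℝ)) ^ 2)⁻¹
      have hn0 : (0 : ℝ) < (n : ℝ) := by exact_mod_cast Nat.pos_of_ne_zero (by omega)
      rw [← mul_inv]
      exact inv_anti₀ (by positivity) key
  refine (Summable.tsum_le_tsum hle hnorm (hgsum.subtype _)).trans ?_
  refine (Summable.tsum_subtype_le g _ hgnonneg hgsum).trans ?_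
  rw [hg, tsum_mul_left]
  calc (N : ℝ)⁻¹ * ∑' n : ℕ, (((n : ℝ)) ^ 2)⁻¹ ≤ (N : ℝ)⁻¹ * 3 :=
        mul_le_mul_of_nonneg_left basel_le (by positivity)
    _ = 3 / N := by ring

theorem stmt11 (k : ℕ) (hk : 2 ≤ k) :
    ∃ C > 0, ∀ x : ℝ, 2 ≤ x →
      ‖((((Finset.Icc 1 ⌊x⌋₊ ×ˢ Finset.Icc 1 ⌊x⌋₊).filter
            (fun mn => gcdk k (mn.1 : ℤ) (mn.2 : ℤ) = 1)).card : ℂ)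
          - (x : ℂ) ^ 2 / riemannZeta ((k : ℂ) + 1))‖ ≤ C * x * Real.log x := by
  refine ⟨100, by norm_num, fun x hx => ?_⟩
  set N : ℕ := ⌊x⌋₊ with hNdef
  have hx0 : (0 : ℝ) < x := by linarith
  have hN2 : 2 ≤ N := Nat.le_floor (by exact_mod_cast hx)
  have hNx : (N : ℝ) ≤ x := Nat.floor_le hx0.le
  have hxN : x < (N : ℝ) + 1 := Nat.lt_floor_add_one x
  have hN0 : (0 : ℝ) < (N : ℝ) := by positivity
  -- the exact count as an integer
  have hcount := count_eq k N gcdk (fun m n hm hmN hn => moebius_sum_eq k m n N hm hmN hn)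
  set S : ℕ := ((Finset.Icc 1 N ×ˢ Finset.Icc 1 N).filter
      (fun mn => gcdk k (mn.1 : ℤ) (mn.2 : ℤ) = 1)).card with hSdef
  -- real version of the count
  have hcountR : (S : ℝ) = ∑ d ∈ Finset.Icc 1 N,
      ((μ d : ℝ) * ((N / d : ℕ) : ℝ) * ((N / d ^ k : ℕ) : ℝ)) := by
    have h2 := congrArg (fun z : ℤ => (z : ℝ)) hcount
    simp only [Int.cast_sum, Int.cast_mul, Int.cast_natCast] at h2
    exact h2
  set T : ℂ := ∑ d ∈ Finset.Icc 1 N, LSeries.term (fun n => ((μ n : ℤ) : ℂ)) ((k : ℂ) + 1) d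
    with hT
  set Z : ℂ := (riemannZeta ((k : ℂ) + 1))⁻¹ with hZ
  set Tr : ℝ := ∑ d ∈ Finset.Icc 1 N, (μ d : ℝ) * ((N : ℝ) ^ 2 / (d : ℝ) ^ (k + 1)) with hTr
  -- T is real
  have hTreal : (N : ℂ) ^ 2 * T = ((Tr : ℝ) : ℂ) := by
    rw [hT, hTr, Finset.mul_sum]
    push_cast
    refine Finset.sum_congr rfl fun d hd => ?_
    rw [Finset.mem_Icc] at hd
    have hd0 : d ≠ 0 := by omega
    rw [term_eq, if_neg hd0]
    push_cast
    ring
  -- E1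
  have hE1 : ‖(S : ℂ) - (N : ℂ) ^ 2 * T‖ ≤ 2 * N * (1 + Real.log N) := by
    rw [hTreal]
    have : (S : ℂ) - ((Tr : ℝ) : ℂ) = (((S : ℝ) - Tr : ℝ) : ℂ) := by push_cast; ring
    rw [this, Complex.norm_real, Real.norm_eq_abs]
    rw [hcountR, hTr]
    exact real_est k N hk hN2
  -- E2
  have hE2 : ‖(N : ℂ) ^ 2 * T - (N : ℂ) ^ 2 * Z‖ ≤ 3 * N := by
    rw [← mul_sub, norm_mul, norm_pow, Complex.norm_natCast]
    calc (N : ℝ) ^ 2 * ‖T - Z‖ ≤ (N : ℝ) ^ 2 * (3 / N) :=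
          mul_le_mul_of_nonneg_left (tail_bound k N hk hN2) (by positivity)
      _ = 3 * N := by field_simp
  -- E3
  have hE3 : ‖(N : ℂ) ^ 2 * Z - (x : ℂ) ^ 2 * Z‖ ≤ 6 * x := by
    rw [← sub_mul, norm_mul]
    have h1 : ‖(N : ℂ) ^ 2 - (x : ℂ) ^ 2‖ ≤ 2 * x := by
      have : (N : ℂ) ^ 2 - (x : ℂ) ^ 2 = ((((N : ℝ) ^ 2 - x ^ 2) : ℝ) : ℂ) := by push_cast; ring
      rw [this, Complex.norm_real, Real.norm_eq_abs, abs_sub_comm, abs_of_nonneg (by nlinarith)]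
      nlinarith
    calc ‖(N : ℂ) ^ 2 - (x : ℂ) ^ 2‖ * ‖Z‖ ≤ (2 * x) * 3 :=
          mul_le_mul h1 (norm_zeta_inv_le k hk) (norm_nonneg _) (by linarith)
      _ = 6 * x := by ring
  have hdiv : (x : ℂ) ^ 2 / riemannZeta ((k : ℂ) + 1) = (x : ℂ) ^ 2 * Z := by
    rw [hZ, div_eq_mul_inv]
  have htri : ‖(S : ℂ) - (x : ℂ) ^ 2 / riemannZeta ((k : ℂ) + 1)‖
      ≤ 2 * N * (1 + Real.log N) + 3 * N + 6 * x := by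
    rw [hdiv]
    calc ‖(S : ℂ) - (x : ℂ) ^ 2 * Z‖
        ≤ ‖(S : ℂ) - (N : ℂ) ^ 2 * T‖ + ‖(N : ℂ) ^ 2 * T - (N : ℂ) ^ 2 * Z‖
          + ‖(N : ℂ) ^ 2 * Z - (x : ℂ) ^ 2 * Z‖ := by
          have t1 : ∀ a b c : ℂ, ‖a - c‖ ≤ ‖a - b‖ + ‖b - c‖ := fun a b c => by
            simpa [dist_eq_norm] using dist_triangle a b c
          calc ‖(S : ℂ) - (x : ℂ) ^ 2 * Z‖
              ≤ ‖(S : ℂ) - (N : ℂ) ^ 2 * T‖ + ‖(N : ℂ) ^ 2 * T - (x : ℂ) ^ 2 * Z‖ :=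
                t1 _ _ _
            _ ≤ ‖(S : ℂ) - (N : ℂ) ^ 2 * T‖ + (‖(N : ℂ) ^ 2 * T - (N : ℂ) ^ 2 * Z‖
                + ‖(N : ℂ) ^ 2 * Z - (x : ℂ) ^ 2 * Z‖) := by
                have := t1 ((N : ℂ) ^ 2 * T) ((N : ℂ) ^ 2 * Z) ((x : ℂ) ^ 2 * Z)
                linarith
            _ = _ := by ring
      _ ≤ 2 * N * (1 + Real.log N) + 3 * N + 6 * x := by linarith
  -- final numeric estimate
  have hlogN : Real.log N ≤ Real.log x := Real.log_le_log hN0 hNx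
  have hlogx : 0.6931471803 ≤ Real.log x := by
    have h2 : Real.log 2 ≤ Real.log x := Real.log_le_log (by norm_num) hx
    have := Real.log_two_gt_d9
    linarith
  have hlogN0 : 0 ≤ Real.log N := Real.log_nonneg (by exact_mod_cast (by omega : 1 ≤ N))
  have hlogx0 : 0 ≤ Real.log x := hlogN0.trans hlogN
  refine htri.trans ?_
  have e1 : 2 * (N : ℝ) * (1 + Real.log N) ≤ 2 * x * (1 + Real.log x) := by nlinarith
  have e3 : 11 * x ≤ 16 * (x * Real.log x) := by nlinarith
  have e4 : 0 ≤ x * Real.log x := mul_nonneg hx0.le hlogx0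
  nlinarith
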